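/- arXiv:2509.26353 — 3 statements merged into one kernel-verified Lean document; each statement's English description precedes it below -/
import Mathlib

section
/- Let R be a field, f(x) ∈ R[x] irreducible, A := R[x]/(f(x)^n), and M(i) := R[x]/(f(x)^i) viewed as an A-module for 0 ≤ i ≤ n. Let a, b, c, d ∈ {0, 1, ..., n} satisfy b < a < c, b < d < c and a + d = b + c. If X is a finitely generated A-module having no indecomposable direct summand N with b < ℓ(N) < c, and Y := X ⊕ M(b) ⊕ M(c), then there is an add(Y)-split sequence 0 → M(a) → M(b) ⊕ M(c) → M(d) → 0. -/
set_option maxHeartbeats 1000000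
set_option synthInstance.maxHeartbeats 200000


open Polynomial CategoryTheory

universe u

namespace Paper

section PolynomialQuotients

/-- The algebra `A = R[x]/(f^N)`. -/
abbrev polyQuot (R : Type u) [CommRing R] (f : R[X]) (N : ℕ) : Type u :=
  R[X] ⧸ Ideal.span {f ^ N}

/-- The `A`-module `M(i) = R[x]/(f^i)`, realized as the quotient of `A = R[x]/(f^N)` by
(the ideal generated by) the image of `f^i`. -/
abbrev polyQuotMod (R : Type u) [CommRing R] (f : R[X]) (N : ℕ) (i : ℕ) : Type u :=
  (polyQuot R f N) ⧸
    (Ideal.span {(Ideal.Quotient.mk (Ideal.span {f ^ N}) f) ^ i} : Ideal (polyQuot R f N))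

end PolynomialQuotients

section Length

/-- The composition length of a module, defined as the Krull dimension of its lattice of
submodules. -/
noncomputable def moduleLength (A : Type u) [Ring A] (M : Type u) [AddCommGroup M]
    [Module A M] : WithBot ℕ∞ :=
  Order.krullDim (Submodule A M)

end Length

section ModuleTheory

variable (A : Type u) [Ring A]

/-- A module is uniserial if its submodules are totally ordered by inclusion. -/
def IsUniserialModule (M : Type u) [AddCommGroup M] [Module A M] : Prop :=
  ∀ p q : Submodule A M, p ≤ q ∨ q ≤ p

/-- A module is indecomposable if it is nonzero and admits no nontrivial direct sum
decomposition. -/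
def IsIndecomposableModule (M : Type u) [AddCommGroup M] [Module A M] : Prop :=
  (∃ m : M, m ≠ 0) ∧ ∀ p q : Submodule A M, IsCompl p q → p = ⊥ ∨ q = ⊥

/-- A ring is a Nakayama algebra if every indecomposable projective module and every
indecomposable injective module is uniserial. -/
def IsNakayamaAlgebra : Prop :=
  ∀ (M : Type u) [AddCommGroup M] [Module A M],
    IsIndecomposableModule A M → (Module.Projective A M ∨ Module.Injective A M) →
      IsUniserialModule A M

end ModuleTheory

section AddSubcategory

variable (A : Type u) [Ring A]

/-- `Z` is a direct summand of `Y`. -/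
def IsDirectSummand (Z Y : Type u) [AddCommGroup Z] [Module A Z]
    [AddCommGroup Y] [Module A Y] : Prop :=
  ∃ (i : Z →ₗ[A] Y) (r : Y →ₗ[A] Z), r.comp i = LinearMap.id

/-- `Z` belongs to `add Y`, i.e. `Z` is (isomorphic to) a direct summand of a finite direct
sum of copies of `Y`. -/
def InAdd (Y : Type u) [AddCommGroup Y] [Module A Y] (Z : Type u) [AddCommGroup Z]
    [Module A Z] : Prop :=
  ∃ k : ℕ, IsDirectSummand A Z (Fin k → Y)

end AddSubcategory


section Aux
variable {R : Type u} [Field R] {f : R[X]} {N : ℕ}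

noncomputable def pp (R : Type u) [Field R] (f : R[X]) (N : ℕ) : polyQuot R f N :=
  Ideal.Quotient.mk _ f

noncomputable def PI (R : Type u) [Field R] (f : R[X]) (N : ℕ) (i : ℕ) :
    Ideal (polyQuot R f N) := Ideal.span {(pp R f N) ^ i}

lemma polyQuotMod_eq (i : ℕ) : polyQuotMod R f N i = (polyQuot R f N ⧸ PI R f N i) := rfl

lemma pp_pow_mk (i : ℕ) : (pp R f N) ^ i = Ideal.Quotient.mk _ (f ^ i) := by
  simp [pp, map_pow]

lemma cancel_pow (hf : Irreducible f) {i j : ℕ} (hij : i ≤ j) (hjN : j ≤ N)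
    {s : polyQuot R f N} (h : (pp R f N) ^ i * s ∈ PI R f N j) : s ∈ PI R f N (j - i) := by
  obtain ⟨s', rfl⟩ := Ideal.Quotient.mk_surjective s
  rw [PI, pp_pow_mk, Ideal.mem_span_singleton] at h ⊢
  obtain ⟨t, ht⟩ := h
  obtain ⟨t', rfl⟩ := Ideal.Quotient.mk_surjective t
  rw [pp_pow_mk, ← map_mul, ← map_mul, Ideal.Quotient.mk_eq_mk_iff_sub_mem,
    Ideal.mem_span_singleton] at ht
  obtain ⟨u, hu⟩ := ht
  have h1 : f ^ i * f ^ (j - i) = f ^ j := by rw [← pow_add]; congr 1; omega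
  have h2 : f ^ i * f ^ (N - i) = f ^ N := by rw [← pow_add]; congr 1; omega
  have h3 : f ^ (j - i) * f ^ (N - j) = f ^ (N - i) := by rw [← pow_add]; congr 1; omega
  have hfi : f ^ i ≠ 0 := pow_ne_zero _ hf.ne_zero
  have hs' : s' = f ^ (j - i) * t' + f ^ (N - i) * u :=
    mul_left_cancel₀ hfi (by linear_combination hu - t' * h1 - u * h2)
  exact ⟨Ideal.Quotient.mk _ (t' + f ^ (N - j) * u), by
    rw [← map_mul]; exact congrArg _ (by linear_combination hs' - u * h3)⟩

lemma le_of_pow_mem (hf : Irreducible f) {k k' : ℕ} (hk'N : k' ≤ N)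
    (h : (pp R f N) ^ k ∈ PI R f N k') : k' ≤ k := by
  rw [PI, pp_pow_mk, pp_pow_mk, Ideal.mem_span_singleton] at h
  obtain ⟨t, ht⟩ := h
  obtain ⟨t', rfl⟩ := Ideal.Quotient.mk_surjective t
  rw [← map_mul, Ideal.Quotient.mk_eq_mk_iff_sub_mem, Ideal.mem_span_singleton] at ht
  obtain ⟨u, hu⟩ := ht
  have hd : f ^ k' ∣ f ^ k := by
    refine ⟨t' + f ^ (N - k') * u, ?_⟩
    have h2 : f ^ k' * f ^ (N - k') = f ^ N := by rw [← pow_add]; congr 1; omega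
    linear_combination hu - u * h2
  exact (pow_dvd_pow_iff hf.ne_zero hf.not_isUnit).mp hd

lemma pi_le_pi {k k' : ℕ} (h : k' ≤ k) : PI R f N k ≤ PI R f N k' := by
  rw [PI, PI, Ideal.span_singleton_le_span_singleton]
  exact pow_dvd_pow _ h

/-- a linear map out of `M i` determined by the image of `1`. -/
noncomputable def toM (i : ℕ) {W : Type*} [AddCommGroup W] [Module (polyQuot R f N) W]
    (w : W) (hw : (pp R f N) ^ i • w = 0) : polyQuotMod R f N i →ₗ[polyQuot R f N] W :=
  Submodule.liftQ _ (LinearMap.toSpanSingleton _ W w) <| by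
    rintro x hx
    rw [Ideal.mem_span_singleton] at hx
    obtain ⟨t, rfl⟩ := hx
    rw [LinearMap.mem_ker, LinearMap.toSpanSingleton_apply, mul_comm, mul_smul]
    show t • (pp R f N) ^ i • w = 0
    rw [hw, smul_zero]

@[simp] lemma toM_mk (i : ℕ) {W : Type*} [AddCommGroup W] [Module (polyQuot R f N) W]
    (w : W) (hw : (pp R f N) ^ i • w = 0) (r : polyQuot R f N) :
    toM i w hw (Submodule.Quotient.mk r) = r • w := rfl

lemma map_eq_toM {i : ℕ} {W : Type*} [AddCommGroup W] [Module (polyQuot R f N) W]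
    (h : polyQuotMod R f N i →ₗ[polyQuot R f N] W) (r : polyQuot R f N) :
    h (Submodule.Quotient.mk r) = r • h (Submodule.Quotient.mk 1) := by
  rw [← map_smul]
  congr 1
  show _ = Submodule.Quotient.mk (r • (1 : polyQuot R f N))
  rw [smul_eq_mul, mul_one]

lemma ann_one (i : ℕ) :
    (pp R f N) ^ i • (Submodule.Quotient.mk 1 : polyQuotMod R f N i) = 0 := by
  show Submodule.Quotient.mk ((pp R f N) ^ i • (1 : polyQuot R f N)) = 0
  rw [Submodule.Quotient.mk_eq_zero, smul_eq_mul, mul_one]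
  exact Ideal.subset_span rfl

lemma ann_map {i : ℕ} {W : Type*} [AddCommGroup W] [Module (polyQuot R f N) W]
    (h : polyQuotMod R f N i →ₗ[polyQuot R f N] W) :
    (pp R f N) ^ i • h (Submodule.Quotient.mk 1) = 0 := by
  rw [← map_smul, ann_one, map_zero]

end Aux
section Seq
variable (R : Type u) [Field R] (f : R[X]) (N : ℕ)

lemma smul_mk {i : ℕ} (r s : polyQuot R f N) :
    r • (Submodule.Quotient.mk s : polyQuotMod R f N i) = Submodule.Quotient.mk (r * s) := by
  rw [← smul_eq_mul, Submodule.Quotient.mk_smul]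

lemma mk_eq_zero_iff {i : ℕ} (s : polyQuot R f N) :
    (Submodule.Quotient.mk s : polyQuotMod R f N i) = 0 ↔ s ∈ PI R f N i :=
  Submodule.Quotient.mk_eq_zero _

lemma ann_of_le {i j : ℕ} (hji : j ≤ i) :
    (pp R f N) ^ i • (Submodule.Quotient.mk 1 : polyQuotMod R f N j) = 0 := by
  rw [smul_mk, mul_one, mk_eq_zero_iff]
  exact pi_le_pi hji (Ideal.subset_span rfl)

lemma ann_mul {i j : ℕ} (hij : i ≤ j) :
    (pp R f N) ^ i • (Submodule.Quotient.mk ((pp R f N) ^ (j - i)) :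
      polyQuotMod R f N j) = 0 := by
  rw [smul_mk, ← pow_add, mk_eq_zero_iff]
  have : i + (j - i) = j := by omega
  rw [this]
  exact Ideal.subset_span rfl

/-- the canonical projection `M i → M j` for `j ≤ i`. -/
noncomputable def qmap (i j : ℕ) (h : j ≤ i) :
    polyQuotMod R f N i →ₗ[polyQuot R f N] polyQuotMod R f N j :=
  toM i (Submodule.Quotient.mk 1) (ann_of_le R f N h)

/-- the map `M i → M j`, `x ↦ π^(j-i) x`, for `i ≤ j`. -/
noncomputable def mulmap (i j : ℕ) (h : i ≤ j) :
    polyQuotMod R f N i →ₗ[polyQuot R f N] polyQuotMod R f N j :=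
  toM i (Submodule.Quotient.mk ((pp R f N) ^ (j - i))) (ann_mul R f N h)

@[simp] lemma qmap_mk (i j : ℕ) (h : j ≤ i) (r : polyQuot R f N) :
    qmap R f N i j h (Submodule.Quotient.mk r) = Submodule.Quotient.mk r := by
  rw [qmap, toM_mk, smul_mk, mul_one]

@[simp] lemma mulmap_mk (i j : ℕ) (h : i ≤ j) (r : polyQuot R f N) :
    mulmap R f N i j h (Submodule.Quotient.mk r) =
      Submodule.Quotient.mk ((pp R f N) ^ (j - i) * r) := by
  rw [mulmap, toM_mk, smul_mk, mul_comm]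

/-- the map `g : M a → M b × M c`. -/
noncomputable def gmap (a b c : ℕ) (hba : b ≤ a) (hac : a ≤ c) :
    polyQuotMod R f N a →ₗ[polyQuot R f N] (polyQuotMod R f N b × polyQuotMod R f N c) :=
  LinearMap.prod (qmap R f N a b hba) (mulmap R f N a c hac)

/-- the map `v : M b × M c → M d`. -/
noncomputable def vmap (b c d : ℕ) (hbd : b ≤ d) (hdc : d ≤ c) :
    (polyQuotMod R f N b × polyQuotMod R f N c) →ₗ[polyQuot R f N] polyQuotMod R f N d :=
  (mulmap R f N b d hbd).comp (LinearMap.fst _ _ _) -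
    (qmap R f N c d hdc).comp (LinearMap.snd _ _ _)

lemma gmap_mk (a b c : ℕ) (hba : b ≤ a) (hac : a ≤ c) (r : polyQuot R f N) :
    gmap R f N a b c hba hac (Submodule.Quotient.mk r) =
      (Submodule.Quotient.mk r, Submodule.Quotient.mk ((pp R f N) ^ (c - a) * r)) := by
  simp only [gmap, LinearMap.prod_apply, Function.prod, qmap_mk, mulmap_mk]

lemma vmap_mk (b c d : ℕ) (hbd : b ≤ d) (hdc : d ≤ c) (y z : polyQuot R f N) :
    vmap R f N b c d hbd hdc (Submodule.Quotient.mk y, Submodule.Quotient.mk z) =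
      Submodule.Quotient.mk ((pp R f N) ^ (d - b) * y - z) := by
  rw [vmap, LinearMap.sub_apply, LinearMap.comp_apply, LinearMap.comp_apply]
  simp only [LinearMap.fst_apply, LinearMap.snd_apply, qmap_mk, mulmap_mk]
  rw [← Submodule.Quotient.mk_sub]

lemma gmap_inj (hf : Irreducible f) {a b c : ℕ} (hba : b ≤ a) (hac : a ≤ c) (hcN : c ≤ N) :
    Function.Injective (gmap R f N a b c hba hac) := by
  rw [← LinearMap.ker_eq_bot, Submodule.eq_bot_iff]
  rintro x hx
  obtain ⟨r, rfl⟩ := Submodule.Quotient.mk_surjective _ x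
  rw [LinearMap.mem_ker, gmap_mk, Prod.mk_eq_zero] at hx
  have h2 := hx.2
  rw [mk_eq_zero_iff] at h2
  have := cancel_pow hf (Nat.sub_le c a) hcN h2
  have hca : c - (c - a) = a := by omega
  rw [hca] at this
  rw [mk_eq_zero_iff]
  exact this

lemma vmap_surj {b c d : ℕ} (hbd : b ≤ d) (hdc : d ≤ c) :
    Function.Surjective (vmap R f N b c d hbd hdc) := by
  intro z
  obtain ⟨s, rfl⟩ := Submodule.Quotient.mk_surjective _ z
  refine ⟨(0, Submodule.Quotient.mk (-s)), ?_⟩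
  have h0 : (0 : polyQuotMod R f N b) = Submodule.Quotient.mk 0 := rfl
  rw [h0, vmap_mk]
  congr 1
  ring

lemma range_gmap_eq_ker_vmap {a b c d : ℕ} (hba : b ≤ a) (hac : a ≤ c) (hbd : b ≤ d)
    (hdc : d ≤ c) (heq : c - a = d - b) :
    LinearMap.range (gmap R f N a b c hba hac) =
      LinearMap.ker (vmap R f N b c d hbd hdc) := by
  have hdb : (pp R f N) ^ (d - b) * (pp R f N) ^ b = (pp R f N) ^ d := by
    rw [← pow_add]; congr 1; omega
  apply le_antisymm
  · rintro _ ⟨x, rfl⟩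
    obtain ⟨r, rfl⟩ := Submodule.Quotient.mk_surjective _ x
    rw [LinearMap.mem_ker, gmap_mk, vmap_mk, heq, sub_self]
    exact (mk_eq_zero_iff R f N 0).mpr (zero_mem _)
  · rintro ⟨y, z⟩ hyz
    obtain ⟨y', rfl⟩ := Submodule.Quotient.mk_surjective _ y
    obtain ⟨z', rfl⟩ := Submodule.Quotient.mk_surjective _ z
    rw [LinearMap.mem_ker, vmap_mk, mk_eq_zero_iff, PI, Ideal.mem_span_singleton] at hyz
    obtain ⟨w, hw⟩ := hyz
    refine ⟨Submodule.Quotient.mk (y' - (pp R f N) ^ b * w), ?_⟩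
    rw [gmap_mk]
    refine Prod.ext ?_ ?_
    · show Submodule.Quotient.mk _ = Submodule.Quotient.mk _
      rw [Submodule.Quotient.eq]
      refine (pi_le_pi (le_refl b)) ?_
      rw [PI, Ideal.mem_span_singleton]
      exact ⟨-w, by ring⟩
    · show Submodule.Quotient.mk _ = Submodule.Quotient.mk _
      congr 1
      rw [heq]
      linear_combination hw - w * hdb
end Seq
section Approx
variable (R : Type u) [Field R] (f : R[X]) (N : ℕ)

/-- the element-wise condition equivalent to factorization through `g`. -/
def La (a b c : ℕ) (Z : Type*) [AddCommGroup Z] [Module (polyQuot R f N) Z] : Prop :=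
  ∀ z₀ : Z, (pp R f N) ^ a • z₀ = 0 →
    ∃ z₁ z₂ : Z, (pp R f N) ^ b • z₁ = 0 ∧ (pp R f N) ^ c • z₂ = 0 ∧
      z₀ = z₁ + (pp R f N) ^ (c - a) • z₂

/-- factorization through `v`. -/
def Ra (b c d : ℕ) (hbd : b ≤ d) (hdc : d ≤ c) (Z : Type*) [AddCommGroup Z]
    [Module (polyQuot R f N) Z] : Prop :=
  ∀ h : Z →ₗ[polyQuot R f N] polyQuotMod R f N d,
    ∃ t : Z →ₗ[polyQuot R f N] (polyQuotMod R f N b × polyQuotMod R f N c),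
      (vmap R f N b c d hbd hdc).comp t = h

lemma La_of_summand {a b c : ℕ} {Z Y' : Type*} [AddCommGroup Z]
    [Module (polyQuot R f N) Z] [AddCommGroup Y'] [Module (polyQuot R f N) Y']
    (hY : La R f N a b c Y') (i : Z →ₗ[polyQuot R f N] Y')
    (r : Y' →ₗ[polyQuot R f N] Z) (hri : r.comp i = LinearMap.id) :
    La R f N a b c Z := by
  intro z₀ hz₀
  obtain ⟨y₁, y₂, h1, h2, h3⟩ := hY (i z₀) (by rw [← map_smul, hz₀, map_zero])
  refine ⟨r y₁, r y₂, ?_, ?_, ?_⟩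
  · rw [← map_smul, h1, map_zero]
  · rw [← map_smul, h2, map_zero]
  · have := congrArg r (congrArg (fun w => w) h3)
    have hz : r (i z₀) = z₀ := by
      have := congrArg (fun φ => φ z₀) hri; simpa using this
    calc z₀ = r (i z₀) := hz.symm
    _ = r (y₁ + (pp R f N) ^ (c - a) • y₂) := by rw [h3]
    _ = r y₁ + (pp R f N) ^ (c - a) • r y₂ := by rw [map_add, map_smul]

lemma Ra_of_summand {b c d : ℕ} {hbd : b ≤ d} {hdc : d ≤ c} {Z Y' : Type*} [AddCommGroup Z]
    [Module (polyQuot R f N) Z] [AddCommGroup Y'] [Module (polyQuot R f N) Y']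
    (hY : Ra R f N b c d hbd hdc Y') (i : Z →ₗ[polyQuot R f N] Y')
    (r : Y' →ₗ[polyQuot R f N] Z) (hri : r.comp i = LinearMap.id) :
    Ra R f N b c d hbd hdc Z := by
  intro h
  obtain ⟨t, ht⟩ := hY (h.comp r)
  refine ⟨t.comp i, ?_⟩
  rw [← LinearMap.comp_assoc, ht, LinearMap.comp_assoc, hri, LinearMap.comp_id]

lemma La_pi {a b c : ℕ} {ι : Type*} [Fintype ι] (Z : ι → Type*)
    [∀ j, AddCommGroup (Z j)] [∀ j, Module (polyQuot R f N) (Z j)]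
    (hZ : ∀ j, La R f N a b c (Z j)) : La R f N a b c (∀ j, Z j) := by
  intro z₀ hz₀
  have hcomp : ∀ j, ∃ z₁ z₂ : Z j, (pp R f N) ^ b • z₁ = 0 ∧ (pp R f N) ^ c • z₂ = 0 ∧
      z₀ j = z₁ + (pp R f N) ^ (c - a) • z₂ := by
    intro j
    exact hZ j (z₀ j) (by have := congrFun hz₀ j; simpa using this)
  choose z₁ z₂ h1 h2 h3 using hcomp
  exact ⟨z₁, z₂, funext fun j => by simpa using h1 j, funext fun j => by simpa using h2 j,
    funext fun j => by simpa using h3 j⟩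

lemma Ra_pi {b c d : ℕ} {hbd : b ≤ d} {hdc : d ≤ c} {ι : Type*} [Fintype ι] [DecidableEq ι]
    (Z : ι → Type*) [∀ j, AddCommGroup (Z j)] [∀ j, Module (polyQuot R f N) (Z j)]
    (hZ : ∀ j, Ra R f N b c d hbd hdc (Z j)) : Ra R f N b c d hbd hdc (∀ j, Z j) := by
  intro h
  have hcomp : ∀ j, ∃ t : Z j →ₗ[polyQuot R f N] (polyQuotMod R f N b × polyQuotMod R f N c),
      (vmap R f N b c d hbd hdc).comp t = h.comp (LinearMap.single _ _ j) := fun j =>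
    hZ j (h.comp (LinearMap.single _ _ j))
  choose t ht using hcomp
  refine ⟨∑ j, (t j).comp (LinearMap.proj j), ?_⟩
  refine LinearMap.ext fun z => ?_
  rw [LinearMap.comp_apply, LinearMap.sum_apply, map_sum]
  have : ∀ j, vmap R f N b c d hbd hdc (((t j).comp (LinearMap.proj j)) z) =
      h (Pi.single j (z j)) := by
    intro j
    have := congrArg (fun φ => φ (z j)) (ht j)
    simpa using this
  rw [Finset.sum_congr rfl (fun j _ => this j)]
  rw [← map_sum]
  congr 1
  exact Finset.univ_sum_single z

lemma La_prod {a b c : ℕ} (Z₁ Z₂ : Type*) [AddCommGroup Z₁] [Module (polyQuot R f N) Z₁]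
    [AddCommGroup Z₂] [Module (polyQuot R f N) Z₂]
    (h1 : La R f N a b c Z₁) (h2 : La R f N a b c Z₂) : La R f N a b c (Z₁ × Z₂) := by
  rintro ⟨x, y⟩ hz₀
  rw [Prod.smul_mk, Prod.mk_eq_zero] at hz₀
  obtain ⟨x₁, x₂, hx1, hx2, hx3⟩ := h1 x hz₀.1
  obtain ⟨y₁, y₂, hy1, hy2, hy3⟩ := h2 y hz₀.2
  exact ⟨(x₁, y₁), (x₂, y₂), by simp [Prod.smul_mk, hx1, hy1, Prod.ext_iff],
    by simp [Prod.smul_mk, hx2, hy2, Prod.ext_iff], by simp [Prod.ext_iff, hx3, hy3]⟩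

lemma Ra_prod {b c d : ℕ} {hbd : b ≤ d} {hdc : d ≤ c} (Z₁ Z₂ : Type*) [AddCommGroup Z₁]
    [Module (polyQuot R f N) Z₁] [AddCommGroup Z₂] [Module (polyQuot R f N) Z₂]
    (h1 : Ra R f N b c d hbd hdc Z₁) (h2 : Ra R f N b c d hbd hdc Z₂) :
    Ra R f N b c d hbd hdc (Z₁ × Z₂) := by
  intro h
  obtain ⟨t₁, ht₁⟩ := h1 (h.comp (LinearMap.inl _ _ _))
  obtain ⟨t₂, ht₂⟩ := h2 (h.comp (LinearMap.inr _ _ _))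
  refine ⟨t₁.comp (LinearMap.fst _ _ _) + t₂.comp (LinearMap.snd _ _ _), ?_⟩
  ext z
  · have := congrArg (fun φ => φ z) ht₁
    simpa using this
  · have := congrArg (fun φ => φ z) ht₂
    simpa using this

lemma La_M (hf : Irreducible f) {a b c e : ℕ} (hba : b ≤ a) (hac : a ≤ c)
    (he : e ≤ b ∨ (c ≤ e ∧ e ≤ N)) : La R f N a b c (polyQuotMod R f N e) := by
  intro z₀ hz₀
  obtain ⟨s, rfl⟩ := Submodule.Quotient.mk_surjective _ z₀
  rcases he with he | ⟨hce, heN⟩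
  · refine ⟨Submodule.Quotient.mk s, 0, ?_, smul_zero _, by rw [smul_zero, add_zero]⟩
    rw [smul_mk, mk_eq_zero_iff, PI, Ideal.mem_span_singleton]
    exact Dvd.dvd.mul_right (pow_dvd_pow _ he) s
  · rw [smul_mk, mk_eq_zero_iff] at hz₀
    have := cancel_pow hf (le_trans hac hce) heN hz₀
    rw [PI, Ideal.mem_span_singleton] at this
    obtain ⟨u, hu⟩ := this
    refine ⟨0, Submodule.Quotient.mk ((pp R f N) ^ (e - c) * u), ?_, ?_, ?_⟩
    · rw [smul_zero]
    · rw [smul_mk, mk_eq_zero_iff, PI, Ideal.mem_span_singleton]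
      refine ⟨u, ?_⟩
      rw [← mul_assoc, ← pow_add]
      congr 2
      omega
    · rw [smul_mk, zero_add]
      congr 1
      rw [hu, ← mul_assoc, ← pow_add]
      congr 2
      omega

lemma Ra_M (hf : Irreducible f) {b c d e : ℕ} (hbd : b ≤ d) (hdc : d ≤ c) (hcN : c ≤ N)
    (he : e ≤ b ∨ c ≤ e) : Ra R f N b c d hbd hdc (polyQuotMod R f N e) := by
  intro h
  have hann := ann_map h
  obtain ⟨s, hs⟩ := Submodule.Quotient.mk_surjective _ (h (Submodule.Quotient.mk 1))
  rcases he with he | hce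
  · -- h(1) = mk s with π^e s ∈ PI d, so s = π^(d-e) w
    rw [← hs, smul_mk, mk_eq_zero_iff] at hann
    have := cancel_pow hf (le_trans he hbd) (le_trans hdc hcN) hann
    rw [PI, Ideal.mem_span_singleton] at this
    obtain ⟨w, hw⟩ := this
    refine ⟨LinearMap.prod (toM e (Submodule.Quotient.mk ((pp R f N) ^ (b - e) * w))
      (by rw [smul_mk, mk_eq_zero_iff, PI, Ideal.mem_span_singleton]
          exact ⟨w, by rw [← mul_assoc, ← pow_add]; congr 2; omega⟩)) 0, ?_⟩
    refine LinearMap.ext fun x => ?_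
    obtain ⟨r, rfl⟩ := Submodule.Quotient.mk_surjective _ x
    rw [LinearMap.comp_apply, LinearMap.prod_apply]
    show vmap R f N b c d hbd hdc (_, (0 : _)) = _
    rw [toM_mk, smul_mk]
    have h0 : (0 : polyQuotMod R f N c) = Submodule.Quotient.mk 0 := rfl
    rw [h0, vmap_mk, map_eq_toM h, ← hs, smul_mk]
    congr 1
    have hpow : (pp R f N) ^ (d - b) * (pp R f N) ^ (b - e) = (pp R f N) ^ (d - e) := by
      rw [← pow_add]; congr 1; omega
    rw [hw, sub_zero]
    linear_combination r * w * hpow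
  · -- e ≥ c : factor through the projection component
    refine ⟨LinearMap.prod 0 (toM e (Submodule.Quotient.mk (-s))
      (by rw [smul_mk, mk_eq_zero_iff, PI, Ideal.mem_span_singleton]
          exact ⟨(pp R f N) ^ (e - c) * (-s), by rw [← mul_assoc, ← pow_add]; congr 2; omega⟩)),
      ?_⟩
    refine LinearMap.ext fun x => ?_
    obtain ⟨r, rfl⟩ := Submodule.Quotient.mk_surjective _ x
    rw [LinearMap.comp_apply, LinearMap.prod_apply]
    show vmap R f N b c d hbd hdc ((0 : _), _) = _
    rw [toM_mk, smul_mk]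
    have h0 : (0 : polyQuotMod R f N b) = Submodule.Quotient.mk 0 := rfl
    rw [h0, vmap_mk, map_eq_toM h, ← hs, smul_mk]
    congr 1
    ring

end Approx
lemma krullDim_fin (n : ℕ) : Order.krullDim (Fin (n + 1)) = (n : WithBot ℕ∞) := by
  apply le_antisymm
  · apply iSup_le
    intro p
    have h1 : p.length + 1 ≤ n + 1 := Fin.nonempty_embedding_iff.mp
      ⟨(OrderEmbedding.ofStrictMono p.toFun p.strictMono).toEmbedding⟩
    exact_mod_cast Nat.cast_le.mpr (by omega : p.length ≤ n)
  · exact Order.LTSeries.length_le_krullDim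
      ⟨n, fun i => i, fun i => by simpa using Fin.castSucc_lt_succ i⟩

section Classify
variable (R : Type u) [Field R] (f : R[X]) (N : ℕ)

/-- the submodule `(π^k)/(π^e)` of `M e`. -/
noncomputable def Sk (e k : ℕ) : Submodule (polyQuot R f N) (polyQuotMod R f N e) :=
  Submodule.map (PI R f N e).mkQ (PI R f N k)

lemma Sk_antitone {e k k' : ℕ} (h : k' ≤ k) : Sk R f N e k ≤ Sk R f N e k' :=
  Submodule.map_mono (pi_le_pi h)

lemma le_of_Sk_le (hf : Irreducible f) {e k k' : ℕ} (hk'N : k' ≤ N) (hk'e : k' ≤ e)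
    (h : Sk R f N e k ≤ Sk R f N e k') : k' ≤ k := by
  have hmem : (PI R f N e).mkQ ((pp R f N) ^ k) ∈ Sk R f N e k :=
    ⟨_, Ideal.subset_span rfl, rfl⟩
  obtain ⟨x, hx, hxe⟩ := h hmem
  have hsub : (pp R f N) ^ k - x ∈ PI R f N e := by
    rw [← Submodule.Quotient.eq]
    exact hxe.symm
  have : (pp R f N) ^ k ∈ PI R f N k' := by
    have : (pp R f N) ^ k = x + ((pp R f N) ^ k - x) := by ring
    rw [this]
    exact add_mem hx (pi_le_pi hk'e hsub)
  exact le_of_pow_mem hf hk'N this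

lemma Sk_classify (hf : Irreducible f) {e : ℕ} (heN : e ≤ N)
    (S : Submodule (polyQuot R f N) (polyQuotMod R f N e)) :
    ∃ k, k ≤ e ∧ S = Sk R f N e k := by
  set J : Ideal (polyQuot R f N) := Submodule.comap (PI R f N e).mkQ S with hJ
  set J' : Ideal R[X] := Ideal.comap (Ideal.Quotient.mk (Ideal.span {f ^ N})) J with hJ'
  obtain ⟨gen, hgen⟩ := (IsPrincipalIdealRing.principal J').principal
  have hgen' : J' = Ideal.span {gen} := hgen
  have hfe : f ^ e ∈ J' := by
    show Ideal.Quotient.mk _ (f ^ e) ∈ J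
    show (PI R f N e).mkQ _ ∈ S
    have : (Ideal.Quotient.mk (Ideal.span {f ^ N})) (f ^ e) = (pp R f N) ^ e := by
      rw [pp_pow_mk]
    rw [this]
    have : (PI R f N e).mkQ ((pp R f N) ^ e) = 0 := by
      rw [Submodule.mkQ_apply, Submodule.Quotient.mk_eq_zero]
      exact Ideal.subset_span rfl
    rw [this]
    exact zero_mem S
  have hdvd : gen ∣ f ^ e := by
    rw [← Ideal.mem_span_singleton, ← hgen']
    exact hfe
  obtain ⟨k, hke, hassoc⟩ := (dvd_prime_pow hf.prime e).mp hdvd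
  have hJ'eq : J' = Ideal.span {f ^ k} := by
    rw [hgen', Ideal.span_singleton_eq_span_singleton.mpr hassoc]
  have hJeq : J = PI R f N k := by
    have hsurj := Ideal.Quotient.mk_surjective (I := Ideal.span {f ^ N})
    have h1 : Ideal.map (Ideal.Quotient.mk (Ideal.span {f ^ N})) J' = J :=
      Ideal.map_comap_of_surjective _ hsurj J
    rw [hJ'eq, Ideal.map_span, Set.image_singleton, ← pp_pow_mk] at h1
    exact h1.symm
  refine ⟨k, hke, ?_⟩
  have : Submodule.map (PI R f N e).mkQ (Submodule.comap (PI R f N e).mkQ S) = S := by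
    exact Submodule.map_comap_eq_of_surjective (Submodule.mkQ_surjective _) _
  rw [← this, ← hJ, hJeq, Sk]; rfl

lemma moduleLength_M (hf : Irreducible f) {e : ℕ} (heN : e ≤ N) :
    moduleLength (polyQuot R f N) (polyQuotMod R f N e) = (e : WithBot ℕ∞) := by
  have hφmono : StrictMono (fun i : Fin (e + 1) => Sk R f N e (e - (i : ℕ))) := by
    intro i j hij
    have h1 : Sk R f N e (e - (i:ℕ)) ≤ Sk R f N e (e - (j:ℕ)) :=
      Sk_antitone R f N (by omega)
    refine lt_of_le_of_ne h1 ?_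
    intro heqS
    have h2 : e - (i:ℕ) ≤ e - (j:ℕ) :=
      le_of_Sk_le R f N hf (by omega) (by omega) (le_of_eq heqS.symm)
    have hi := i.isLt
    have hj := j.isLt
    omega
  have hφsurj : Function.Surjective (fun i : Fin (e + 1) => Sk R f N e (e - (i : ℕ))) := by
    intro S
    obtain ⟨k, hke, rfl⟩ := Sk_classify R f N hf heN S
    exact ⟨⟨e - k, by omega⟩, by simp; congr 1; omega⟩
  have := Order.krullDim_eq_of_orderIso
    (StrictMono.orderIsoOfSurjective _ hφmono hφsurj)
  rw [moduleLength, ← this, krullDim_fin]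

lemma indecomposable_M (hf : Irreducible f) {e : ℕ} (he1 : 1 ≤ e) (heN : e ≤ N) :
    IsIndecomposableModule (polyQuot R f N) (polyQuotMod R f N e) := by
  constructor
  · refine ⟨Submodule.Quotient.mk 1, ?_⟩
    intro h0
    rw [mk_eq_zero_iff] at h0
    have : (pp R f N) ^ 0 ∈ PI R f N e := by rwa [pow_zero]
    have := le_of_pow_mem hf heN this
    omega
  · intro p q hpq
    obtain ⟨k, hke, rfl⟩ := Sk_classify R f N hf heN p
    obtain ⟨k', hk'e, rfl⟩ := Sk_classify R f N hf heN q
    rcases le_total k' k with h | h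
    · left
      have hle : Sk R f N e k ≤ Sk R f N e k' := Sk_antitone R f N h
      exact le_bot_iff.mp (by rw [← hpq.inf_eq_bot]; exact le_inf le_rfl hle)
    · right
      have hle : Sk R f N e k' ≤ Sk R f N e k := Sk_antitone R f N h
      exact le_bot_iff.mp (by rw [← hpq.inf_eq_bot]; exact le_inf hle le_rfl)
end Classify
section Decomp
variable (R : Type u) [Field R] (f : R[X]) (N : ℕ)

/-- each `R[X]/(q)` with `(q) ⊇ (f^N)` is `A`-linearly a `polyQuotMod`. -/
lemma quot_equiv_M (hf : Irreducible f) {q : R[X]} {e : ℕ}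
    (hspan : (Ideal.span {q} : Ideal R[X]) = Ideal.span {f ^ e})
    [inst : Module (polyQuot R f N) (R[X] ⧸ (R[X] ∙ q))]
    (hcompat : ∀ (r : R[X]) (v : R[X] ⧸ (R[X] ∙ q)),
      (Ideal.Quotient.mk (Ideal.span {f ^ N}) r) • v = r • v) :
    Nonempty ((R[X] ⧸ (R[X] ∙ q)) ≃ₗ[polyQuot R f N] polyQuotMod R f N e) := by
  have hw : (pp R f N) ^ e • (Submodule.Quotient.mk 1 : R[X] ⧸ (R[X] ∙ q)) = 0 := by
    rw [pp_pow_mk, hcompat, ← Submodule.Quotient.mk_smul, Submodule.Quotient.mk_eq_zero]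
    show f ^ e • (1 : R[X]) ∈ Ideal.span {q}
    rw [hspan, smul_eq_mul, mul_one]
    exact Ideal.subset_span rfl
  set θ := toM e (Submodule.Quotient.mk 1 : R[X] ⧸ (R[X] ∙ q)) hw with hθ
  have hbij : Function.Bijective θ := by
    constructor
    · rw [← LinearMap.ker_eq_bot, Submodule.eq_bot_iff]
      rintro x hx
      obtain ⟨r, rfl⟩ := Submodule.Quotient.mk_surjective _ x
      obtain ⟨s, rfl⟩ := Ideal.Quotient.mk_surjective r
      rw [LinearMap.mem_ker, hθ, toM_mk, hcompat, ← Submodule.Quotient.mk_smul,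
        Submodule.Quotient.mk_eq_zero] at hx
      have : s • (1 : R[X]) ∈ Ideal.span {f ^ e} := by rw [← hspan]; exact hx
      rw [smul_eq_mul, mul_one, Ideal.mem_span_singleton] at this
      obtain ⟨t, rfl⟩ := this
      rw [mk_eq_zero_iff, PI, Ideal.mem_span_singleton, pp_pow_mk, map_mul]
      exact Dvd.intro _ rfl
    · intro v
      obtain ⟨s, rfl⟩ := Submodule.Quotient.mk_surjective _ v
      refine ⟨Submodule.Quotient.mk (Ideal.Quotient.mk _ s), ?_⟩
      rw [hθ, toM_mk, hcompat, ← Submodule.Quotient.mk_smul, smul_eq_mul, mul_one]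
  exact ⟨(LinearEquiv.ofBijective θ hbij).symm⟩

lemma exists_decomp (hf : Irreducible f) (X : Type u) [AddCommGroup X]
    [Module (polyQuot R f N) X] [Module.Finite (polyQuot R f N) X] :
    ∃ (ι : Type u) (_ : Fintype ι) (e : ι → ℕ), (∀ i, e i ≤ N) ∧
      Nonempty (X ≃ₗ[polyQuot R f N] ∀ i, polyQuotMod R f N (e i)) := by
  classical
  letI instRX : Module R[X] X := Module.compHom X (Ideal.Quotient.mk (Ideal.span {f ^ N}))
  have hsmul_def : ∀ (r : R[X]) (x : X),
      r • x = (Ideal.Quotient.mk (Ideal.span {f ^ N}) r) • x := fun r x => rfl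
  haveI : IsScalarTower R[X] (polyQuot R f N) X := by
    constructor
    intro r a x
    obtain ⟨s, rfl⟩ := Ideal.Quotient.mk_surjective a
    have h1 : r • (Ideal.Quotient.mk (Ideal.span {f ^ N}) s) =
        Ideal.Quotient.mk (Ideal.span {f ^ N}) (r * s) := by
      rw [← Ideal.Quotient.mk_eq_mk, ← Ideal.Quotient.mk_eq_mk, ← Submodule.Quotient.mk_smul,
        smul_eq_mul]
    rw [h1, hsmul_def, map_mul, mul_smul]
  haveI : Module.Finite R[X] (polyQuot R f N) :=
    Module.Finite.of_surjective (Submodule.mkQ _) (Submodule.Quotient.mk_surjective _)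
  haveI : Module.Finite R[X] X := Module.Finite.trans (polyQuot R f N) X
  have htor : Module.IsTorsion R[X] X := by
    intro x
    refine ⟨⟨f ^ N, mem_nonZeroDivisors_of_ne_zero (pow_ne_zero N hf.ne_zero)⟩, ?_⟩
    show (f ^ N) • x = 0
    rw [hsmul_def]
    have : Ideal.Quotient.mk (Ideal.span {f ^ N}) (f ^ N) = 0 := by
      rw [Ideal.Quotient.eq_zero_iff_mem]
      exact Ideal.subset_span rfl
    rw [this]; exact zero_smul (A := X) (polyQuot R f N) _
  obtain ⟨ι, hfin, p, hp, e, ⟨E⟩⟩ := Module.equiv_directSum_of_isTorsion htor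
  haveI := hfin
  -- each p i ^ e i is associated to f ^ e i, and e i ≤ N
  have hkey : ∀ i, (Ideal.span {p i ^ e i} : Ideal R[X]) = Ideal.span {f ^ e i} ∧ e i ≤ N := by
    intro i
    -- f^N annihilates the summand
    have hann : (f ^ N) • (Submodule.Quotient.mk 1 : R[X] ⧸ (R[X] ∙ p i ^ e i)) = 0 := by
      set w := (Submodule.Quotient.mk 1 : R[X] ⧸ (R[X] ∙ p i ^ e i))
      have h1 : (f ^ N) • (DirectSum.lof R[X] ι (fun i => R[X] ⧸ (R[X] ∙ p i ^ e i)) i w) = 0 := by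
        have h2 : DirectSum.lof R[X] ι (fun i => R[X] ⧸ (R[X] ∙ p i ^ e i)) i w = E (E.symm (DirectSum.lof R[X] ι (fun i => R[X] ⧸ (R[X] ∙ p i ^ e i)) i w)) := by
          rw [LinearEquiv.apply_symm_apply]
        rw [h2, ← map_smul]
        have h3 : (f ^ N) • (E.symm (DirectSum.lof R[X] ι (fun i => R[X] ⧸ (R[X] ∙ p i ^ e i)) i w)) = 0 := by
          rw [hsmul_def]
          have : Ideal.Quotient.mk (Ideal.span {f ^ N}) (f ^ N) = 0 := by
            rw [Ideal.Quotient.eq_zero_iff_mem]; exact Ideal.subset_span rfl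
          rw [this]; exact zero_smul (A := X) (polyQuot R f N) _
        rw [h3, map_zero]
      have h4 := congrArg (fun z => DirectSum.component R[X] ι (fun i => R[X] ⧸ (R[X] ∙ p i ^ e i)) i z) h1
      simpa using h4
    rw [← Submodule.Quotient.mk_smul, Submodule.Quotient.mk_eq_zero] at hann
    have hdvd : p i ^ e i ∣ f ^ N := by
      have : f ^ N • (1 : R[X]) ∈ Ideal.span {p i ^ e i} := hann
      rwa [smul_eq_mul, mul_one, Ideal.mem_span_singleton] at this
    by_cases he0 : e i = 0
    · constructor
      · rw [he0, pow_zero, pow_zero]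
      · omega
    · have hpf : Associated (p i) f := by
        have h5 : p i ∣ f ^ N := dvd_trans (dvd_pow_self _ he0) hdvd
        have h6 : p i ∣ f := ((hp i).prime).dvd_of_dvd_pow h5
        exact (hp i).associated_of_dvd hf h6
      have hassoc : Associated (p i ^ e i) (f ^ e i) := hpf.pow_pow
      constructor
      · exact Ideal.span_singleton_eq_span_singleton.mpr hassoc
      · have h7 : f ^ e i ∣ f ^ N := hassoc.symm.dvd.trans hdvd
        exact (pow_dvd_pow_iff hf.ne_zero hf.not_isUnit).mp h7
  refine ⟨ι, hfin, e, fun i => (hkey i).2, ?_⟩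
  -- A-module structures on the summands
  letI instV : ∀ i, Module (polyQuot R f N) (R[X] ⧸ (R[X] ∙ p i ^ e i)) := fun i =>
    Module.IsTorsionBy.module (r := f ^ N) (by
      intro x
      obtain ⟨s, rfl⟩ := Submodule.Quotient.mk_surjective _ x
      rw [← Submodule.Quotient.mk_smul, Submodule.Quotient.mk_eq_zero]
      show f ^ N • s ∈ Ideal.span {p i ^ e i}
      rw [(hkey i).1, smul_eq_mul, Ideal.mem_span_singleton]
      exact Dvd.dvd.mul_right (pow_dvd_pow f (hkey i).2) s)
  have hVsmul : ∀ (i : ι) (r : R[X]) (v : R[X] ⧸ (R[X] ∙ p i ^ e i)),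
      (Ideal.Quotient.mk (Ideal.span {f ^ N}) r) • v = r • v := fun i r v => rfl
  -- upgrade E to an A-linear equivalence
  have hEsmul : ∀ (a : polyQuot R f N) (x : X), E (a • x) = a • E x := by
    intro a x
    obtain ⟨r, rfl⟩ := Ideal.Quotient.mk_surjective a
    rw [← hsmul_def, map_smul]
    refine DFinsupp.ext fun i => ?_
    rw [DFinsupp.smul_apply, DFinsupp.smul_apply, hVsmul]
  let E' : X ≃ₗ[polyQuot R f N]
      DirectSum ι (fun i => R[X] ⧸ (R[X] ∙ p i ^ e i)) :=
    { toFun := fun x => E x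
      map_add' := fun x y => map_add E x y
      map_smul' := fun a x => hEsmul a x
      invFun := fun z => E.symm z
      left_inv := fun x => E.symm_apply_apply x
      right_inv := fun z => E.apply_symm_apply z }
  let F1 := DirectSum.linearEquivFunOnFintype (polyQuot R f N) ι
    (fun i => R[X] ⧸ (R[X] ∙ p i ^ e i))
  have hΨ : ∀ i, Nonempty ((R[X] ⧸ (R[X] ∙ p i ^ e i)) ≃ₗ[polyQuot R f N]
      polyQuotMod R f N (e i)) := fun i =>
    quot_equiv_M R f N hf (hkey i).1 (hVsmul i)
  exact ⟨(E'.trans F1).trans (LinearEquiv.piCongrRight fun i => (hΨ i).some)⟩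
end Decomp
section Assemble
variable (R : Type u) [Field R] (f : R[X]) (N : ℕ)

lemma factor_of_La {a b c : ℕ} (hba : b ≤ a) (hac : a ≤ c) {Z : Type*} [AddCommGroup Z]
    [Module (polyQuot R f N) Z] (hZ : La R f N a b c Z)
    (h : polyQuotMod R f N a →ₗ[polyQuot R f N] Z) :
    ∃ t : (polyQuotMod R f N b × polyQuotMod R f N c) →ₗ[polyQuot R f N] Z,
      t.comp (gmap R f N a b c hba hac) = h := by
  obtain ⟨z₁, z₂, h1, h2, h3⟩ := hZ (h (Submodule.Quotient.mk 1)) (ann_map h)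
  refine ⟨(toM b z₁ h1).comp (LinearMap.fst _ _ _) + (toM c z₂ h2).comp (LinearMap.snd _ _ _),
    ?_⟩
  refine LinearMap.ext fun x => ?_
  obtain ⟨r, rfl⟩ := Submodule.Quotient.mk_surjective _ x
  rw [LinearMap.comp_apply, gmap_mk, LinearMap.add_apply, LinearMap.comp_apply,
    LinearMap.comp_apply, LinearMap.fst_apply, LinearMap.snd_apply, toM_mk, toM_mk,
    map_eq_toM h, h3, smul_add, mul_smul, smul_comm]
end Assemble



/-- Let `R` be a field, `f ∈ R[x]` irreducible, `A = R[x]/(f^N)` and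
`M i = R[x]/(f^i)` for `0 ≤ i ≤ N`.  Let `a, b, c, d ≤ N` with `b < a < c`, `b < d < c` and
`a + d = b + c`.  If `X` is a finitely generated `A`-module with no indecomposable direct
summand of composition length strictly between `b` and `c`, and `Y = X ⊕ M b ⊕ M c`, then
there is an `add Y`-split sequence `0 → M a → M b ⊕ M c → M d → 0`. -/
theorem statement12 (R : Type u) [Field R] (f : R[X]) (hf : Irreducible f) (N : ℕ)
    (a b c d : ℕ) (hcN : c ≤ N) (hba : b < a) (hac : a < c) (hbd : b < d) (hdc : d < c)
    (habcd : a + d = b + c)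
    (X : Type u) [AddCommGroup X] [Module (polyQuot R f N) X]
    [Module.Finite (polyQuot R f N) X]
    (hX : ∀ (Z : Type u) [AddCommGroup Z] [Module (polyQuot R f N) Z],
      IsDirectSummand (polyQuot R f N) Z X → IsIndecomposableModule (polyQuot R f N) Z →
        ¬((b : WithBot ℕ∞) < moduleLength (polyQuot R f N) Z ∧
          moduleLength (polyQuot R f N) Z < (c : WithBot ℕ∞))) :
    ∃ (g : polyQuotMod R f N a →ₗ[polyQuot R f N] (polyQuotMod R f N b × polyQuotMod R f N c))
      (v : (polyQuotMod R f N b × polyQuotMod R f N c) →ₗ[polyQuot R f N] polyQuotMod R f N d),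
      Function.Injective g ∧ Function.Surjective v ∧ LinearMap.range g = LinearMap.ker v ∧
      (∀ (Z : Type u) [AddCommGroup Z] [Module (polyQuot R f N) Z],
        InAdd (polyQuot R f N) (X × polyQuotMod R f N b × polyQuotMod R f N c) Z →
          ∀ h : polyQuotMod R f N a →ₗ[polyQuot R f N] Z,
            ∃ t : (polyQuotMod R f N b × polyQuotMod R f N c) →ₗ[polyQuot R f N] Z,
              t.comp g = h) ∧
      (∀ (Z : Type u) [AddCommGroup Z] [Module (polyQuot R f N) Z],
        InAdd (polyQuot R f N) (X × polyQuotMod R f N b × polyQuotMod R f N c) Z →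
          ∀ h : Z →ₗ[polyQuot R f N] polyQuotMod R f N d,
            ∃ t : Z →ₗ[polyQuot R f N] (polyQuotMod R f N b × polyQuotMod R f N c),
              v.comp t = h) := by
  classical
  obtain ⟨ι, hfin, e, heN, ⟨Q⟩⟩ := exists_decomp R f N hf X
  haveI := hfin
  -- every exponent avoids the open interval (b, c)
  have hi : ∀ i, e i ≤ b ∨ c ≤ e i := by
    intro i
    by_contra hcon
    push_neg at hcon
    obtain ⟨h1, h2⟩ : b < e i ∧ e i < c := by omega
    refine hX (polyQuotMod R f N (e i)) ?_ ?_ ?_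
    · refine ⟨(Q.symm.toLinearMap).comp
        (LinearMap.single (polyQuot R f N) (fun j => polyQuotMod R f N (e j)) i),
        (LinearMap.proj (R := polyQuot R f N) (φ := fun j => polyQuotMod R f N (e j)) i).comp
          Q.toLinearMap, ?_⟩
      refine LinearMap.ext fun z => ?_
      simp [LinearMap.proj, Pi.single_eq_same]
    · exact indecomposable_M R f N hf (by omega) (heN i)
    · rw [moduleLength_M R f N hf (heN i)]
      constructor
      · exact_mod_cast h1
      · exact_mod_cast h2
  letI : Module (polyQuot R f N) ((i : ι) → polyQuotMod R f N (e i)) := Pi.module _ _ _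
  -- the approximation properties
  have hLaX : La R f N a b c X := by
    refine La_of_summand R f N (La_pi R f N _ fun i => La_M R f N hf hba.le hac.le ?_)
      Q.toLinearMap Q.symm.toLinearMap (LinearMap.ext fun x => Q.symm_apply_apply x)
    rcases hi i with h | h
    · exact Or.inl h
    · exact Or.inr ⟨h, heN i⟩
  have hRaX : Ra R f N b c d hbd.le hdc.le X :=
    Ra_of_summand R f N (Ra_pi R f N _ fun i => Ra_M R f N hf hbd.le hdc.le hcN (hi i))
      Q.toLinearMap Q.symm.toLinearMap (LinearMap.ext fun x => Q.symm_apply_apply x)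
  have hLaY : La R f N a b c (X × polyQuotMod R f N b × polyQuotMod R f N c) :=
    La_prod R f N _ _ hLaX (La_prod R f N _ _
      (La_M R f N hf hba.le hac.le (Or.inl le_rfl))
      (La_M R f N hf hba.le hac.le (Or.inr ⟨le_rfl, hcN⟩)))
  have hRaY : Ra R f N b c d hbd.le hdc.le (X × polyQuotMod R f N b × polyQuotMod R f N c) :=
    Ra_prod R f N _ _ hRaX (Ra_prod R f N _ _
      (Ra_M R f N hf hbd.le hdc.le hcN (Or.inl le_rfl))
      (Ra_M R f N hf hbd.le hdc.le hcN (Or.inr le_rfl)))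
  have heq : c - a = d - b := by omega
  refine ⟨gmap R f N a b c hba.le hac.le, vmap R f N b c d hbd.le hdc.le,
    gmap_inj R f N hf hba.le hac.le hcN, vmap_surj R f N hbd.le hdc.le,
    range_gmap_eq_ker_vmap R f N hba.le hac.le hbd.le hdc.le heq, ?_, ?_⟩
  · rintro Z _ _ ⟨k, i, r, hri⟩ h
    have hZ : La R f N a b c Z :=
      La_of_summand R f N (La_pi R f N (fun _ : Fin k => _) fun _ => hLaY) i r hri
    exact factor_of_La R f N hba.le hac.le hZ h
  · rintro Z _ _ ⟨k, i, r, hri⟩ h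
    have hZ : Ra R f N b c d hbd.le hdc.le Z :=
      Ra_of_summand R f N (Ra_pi R f N (fun _ : Fin k => _) fun _ => hRaY) i r hri
    exact hZ h


end Paper
end

section
/- Let R be a field and f(x) ∈ R[x] an irreducible separable polynomial, and let K := R[x]/(f(x)). Then K is a separable field extension of R, the algebra A := R[x]/(f(x)^n) admits a K-algebra structure (via a subalgebra of A mapping isomorphically onto A/rad(A) ≅ K), and A ≅ K[y]/(y^n) as K-algebras (in particular as R-algebras). -/
open Polynomial CategoryTheory

universe u

namespace Paper

section PolynomialQuotients

/-- Port repair: the instance search of the current Mathlib no longer finds this (standard)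
`CommRing` structure on `(R[X] ⧸ (f))[X]` when it is needed to form a quotient of it. -/
noncomputable instance polyQuotPolynomialCommRing (R : Type u) [Field R] (f : R[X]) :
    CommRing ((R[X] ⧸ Ideal.span {f})[X]) :=
  inferInstance

end PolynomialQuotients

lemma sep_adjoin (R : Type u) [Field R] (f : R[X]) (hf : Irreducible f)
    (hsep : f.Separable) :
    Algebra.IsSeparable R (AdjoinRoot f) := by
  haveI := Fact.mk hf
  have hf0 : f ≠ 0 := hf.ne_zero
  have hroot : IsSeparable R (AdjoinRoot.root f) := by
    unfold IsSeparable
    rw [AdjoinRoot.minpoly_root hf0]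
    exact hsep.mul_unit
      (isUnit_C.mpr (IsUnit.inv (isUnit_iff_ne_zero.mpr (leadingCoeff_ne_zero.mpr hf0))))
  have htop : IntermediateField.adjoin R {AdjoinRoot.root f} =
      (⊤ : IntermediateField R (AdjoinRoot f)) := by
    rw [eq_top_iff]
    intro x _
    have hx : x ∈ Algebra.adjoin R ({AdjoinRoot.root f} : Set (AdjoinRoot f)) := by
      rw [AdjoinRoot.adjoinRoot_eq_top (f := f)]; trivial
    exact IntermediateField.algebra_adjoin_le_adjoin _ _ hx
  have : Algebra.IsSeparable R (IntermediateField.adjoin R {AdjoinRoot.root f}) :=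
    (IntermediateField.isSeparable_adjoin_simple_iff_isSeparable R (AdjoinRoot f)).mpr hroot
  rw [htop] at this
  exact AlgEquiv.Algebra.isSeparable (IntermediateField.topEquiv)

lemma smooth_adjoin (R : Type u) [Field R] (f : R[X]) (hf : Irreducible f)
    (hsep : f.Separable) :
    Algebra.FormallySmooth R (AdjoinRoot f) := by
  haveI := Fact.mk hf
  haveI := sep_adjoin R f hf hsep
  haveI := Algebra.FormallyEtale.of_isSeparable R (AdjoinRoot f)
  infer_instance

theorem main_aux (R : Type u) [Field R] (K : Type u) [Field K] [Algebra R K]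
    [Algebra.FormallySmooth R K]
    (A : Type u) [CommRing A] [Algebra R A] [FiniteDimensional R A]
    (t : A) (N : ℕ) (hN : 0 < N) (htN : t ^ N = 0)
    (e : (A ⧸ (Ideal.span {t} : Ideal A)) ≃ₐ[R] K)
    (hA : Module.finrank R A = N * Module.finrank R K)
    (h0 : 0 < Module.finrank R K) :
    ∃ alg : Algebra K A,
      letI := alg
      IsScalarTower R K A ∧
      Nonempty (A ≃ₐ[K] (K[X] ⧸ Ideal.span {(X : K[X]) ^ N})) := by
  set m : Ideal A := Ideal.span {t} with hmdef
  have hmN : m ^ N = ⊥ := by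
    rw [hmdef, Ideal.span_singleton_pow, htN, Ideal.span_singleton_eq_bot.mpr rfl]
  have hnil : IsNilpotent m := ⟨N, hmN⟩
  let sec : K →ₐ[R] A := Algebra.FormallySmooth.lift m hnil e.symm.toAlgHom
  let q : A →ₐ[R] K := e.toAlgHom.comp (Ideal.Quotient.mkₐ R m)
  have hqs : ∀ x, q (sec x) = x := by
    intro x
    show e (Ideal.Quotient.mk m (sec x)) = x
    rw [Algebra.FormallySmooth.mk_lift]
    exact e.apply_symm_apply x
  have hker : ∀ a, a - sec (q a) ∈ m := by
    intro a
    have h0 : q (a - sec (q a)) = 0 := by rw [map_sub, hqs, sub_self]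
    have : Ideal.Quotient.mk m (a - sec (q a)) = 0 := by
      apply e.injective
      rw [map_zero]; exact h0
    exact Ideal.Quotient.eq_zero_iff_mem.mp this
  letI alg : Algebra K A := sec.toRingHom.toAlgebra
  haveI tower : IsScalarTower R K A :=
    IsScalarTower.of_algebraMap_eq' (sec.comp_algebraMap).symm
  have haev : aeval t ((X : K[X]) ^ N) = 0 := by rw [map_pow, aeval_X, htN]
  let φ : AdjoinRoot ((X : K[X]) ^ N) →ₐ[K] A := AdjoinRoot.liftAlgHom _ (Algebra.ofId K A) t haev
  have htmem : t ∈ φ.range := ⟨AdjoinRoot.root _, AdjoinRoot.liftAlgHom_root _ _ _ _⟩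
  have hsecmem : ∀ x, sec x ∈ φ.range := fun x => ⟨algebraMap _ _ x, φ.commutes x⟩
  have key : ∀ (j : ℕ) (a : A), ∃ s ∈ φ.range, a - s ∈ m ^ j := by
    intro j
    induction j with
    | zero => intro a; exact ⟨0, Subalgebra.zero_mem _, by simp⟩
    | succ j ih =>
      intro a
      obtain ⟨s, hs, hmem⟩ := ih a
      rw [hmdef, Ideal.span_singleton_pow] at hmem
      obtain ⟨c, hc⟩ := Ideal.mem_span_singleton'.mp hmem
      obtain ⟨d, hd⟩ := Ideal.mem_span_singleton'.mp (hker c)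
      refine ⟨s + sec (q c) * t ^ j,
        Subalgebra.add_mem _ hs
          (Subalgebra.mul_mem _ (hsecmem _) (Subalgebra.pow_mem _ htmem j)), ?_⟩
      have heq : a - (s + sec (q c) * t ^ j) = d * t ^ (j + 1) := by
        have h1 : a - s = c * t ^ j := hc.symm
        calc a - (s + sec (q c) * t ^ j) = (a - s) - sec (q c) * t ^ j := by ring
        _ = (c - sec (q c)) * t ^ j := by rw [h1]; ring
        _ = (d * t) * t ^ j := by rw [hd]
        _ = d * t ^ (j + 1) := by rw [pow_succ]; ring
      rw [heq, hmdef, Ideal.span_singleton_pow]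
      exact Ideal.mem_span_singleton'.mpr ⟨d, rfl⟩
  have hsurj : Function.Surjective φ := by
    intro a
    obtain ⟨s, hs, h00⟩ := key N a
    rw [hmN, Ideal.mem_bot, sub_eq_zero] at h00
    obtain ⟨x, hx⟩ := hs
    exact ⟨x, hx.trans h00.symm⟩
  have hXN0 : ((X : K[X]) ^ N) ≠ 0 := pow_ne_zero N X_ne_zero
  haveI : FiniteDimensional K (AdjoinRoot ((X : K[X]) ^ N)) :=
    Module.Finite.of_basis (AdjoinRoot.powerBasis hXN0).basis
  have hdimD : Module.finrank K (AdjoinRoot ((X : K[X]) ^ N)) = N := by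
    rw [(AdjoinRoot.powerBasis hXN0).finrank, AdjoinRoot.powerBasis_dim, natDegree_X_pow]
  haveI : FiniteDimensional K A := Module.Finite.right R K A
  have hmul := Module.finrank_mul_finrank R K A
  rw [hA] at hmul
  have hdimA : Module.finrank K A = N :=
    Nat.eq_of_mul_eq_mul_left h0 (hmul.trans (Nat.mul_comm N _))
  have hinj : Function.Injective φ :=
    (LinearMap.injective_iff_surjective_of_finrank_eq_finrank
      (f := φ.toLinearMap) (by rw [hdimD, hdimA])).mpr hsurj
  exact ⟨alg, tower, ⟨(AlgEquiv.ofBijective φ ⟨hinj, hsurj⟩).symm⟩⟩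


set_option synthInstance.maxHeartbeats 1000000 in
set_option maxHeartbeats 1600000 in
/-- Let `R` be a field and `f ∈ R[x]` an irreducible separable
polynomial, `K = R[x]/(f)`.  Then `K` is a separable field extension of `R`, the algebra
`A = R[x]/(f^N)` admits a `K`-algebra structure compatible with its `R`-algebra structure,
and `A ≅ K[y]/(y^N)` as `K`-algebras. -/
theorem statement14 (R : Type u) [Field R] (f : R[X]) (hf : Irreducible f)
    (hsep : f.Separable) (N : ℕ) (hN : 0 < N) :
    IsField (R[X] ⧸ Ideal.span {f}) ∧
    Algebra.IsSeparable R (R[X] ⧸ Ideal.span {f}) ∧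
    ∃ alg : Algebra (R[X] ⧸ Ideal.span {f}) (polyQuot R f N),
      letI := alg
      IsScalarTower R (R[X] ⧸ Ideal.span {f}) (polyQuot R f N) ∧
      Nonempty ((polyQuot R f N) ≃ₐ[R[X] ⧸ Ideal.span {f}]
        ((R[X] ⧸ Ideal.span {f})[X] ⧸
          Ideal.span {(X : (R[X] ⧸ Ideal.span {f})[X]) ^ N})) := by
  have hf0 : f ≠ 0 := hf.ne_zero
  haveI hmax : (Ideal.span {f}).IsMaximal := PrincipalIdealRing.isMaximal_of_irreducible hf
  refine ⟨(Ideal.Quotient.maximal_ideal_iff_isField_quotient _).mp hmax,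
    sep_adjoin R f hf hsep, ?_⟩
  set I : Ideal R[X] := Ideal.span {f ^ N} with hI
  have hle : I ≤ Ideal.span {f} :=
    Ideal.span_singleton_le_span_singleton.mpr (dvd_pow_self f hN.ne')
  set t : R[X] ⧸ I := Ideal.Quotient.mk I f with ht
  have htN : t ^ N = 0 := by
    rw [ht, ← map_pow]
    exact Ideal.Quotient.eq_zero_iff_mem.mpr (Ideal.subset_span rfl)
  have hm : (Ideal.span {t} : Ideal (R[X] ⧸ I)) =
      (Ideal.span {f} : Ideal R[X]).map (Ideal.Quotient.mkₐ R I) := by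
    rw [Ideal.map_span, Set.image_singleton]; rfl
  let e : ((R[X] ⧸ I) ⧸ (Ideal.span {t} : Ideal (R[X] ⧸ I))) ≃ₐ[R] (R[X] ⧸ Ideal.span {f}) :=
    (Ideal.quotientEquivAlgOfEq R hm).trans (DoubleQuot.quotQuotEquivQuotOfLEₐ R hle)
  letI : Field (R[X] ⧸ Ideal.span {f}) := Ideal.Quotient.field _
  haveI : Algebra.FormallySmooth R (R[X] ⧸ Ideal.span {f}) := smooth_adjoin R f hf hsep
  haveI : FiniteDimensional R (R[X] ⧸ I) :=
    Module.Finite.of_basis (AdjoinRoot.powerBasis (pow_ne_zero N hf0)).basis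
  have hK : Module.finrank R (R[X] ⧸ Ideal.span {f}) = f.natDegree := by
    have h := (AdjoinRoot.powerBasis hf0).finrank
    rw [AdjoinRoot.powerBasis_dim] at h
    exact h
  have hA : Module.finrank R (R[X] ⧸ I) = N * Module.finrank R (R[X] ⧸ Ideal.span {f}) := by
    have h := (AdjoinRoot.powerBasis (pow_ne_zero N hf0)).finrank
    rw [AdjoinRoot.powerBasis_dim, natDegree_pow] at h
    rw [hK]
    exact h
  have h0 : 0 < Module.finrank R (R[X] ⧸ Ideal.span {f}) := by
    rw [hK]; exact hf.natDegree_pos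
  exact main_aux R (R[X] ⧸ Ideal.span {f}) (R[X] ⧸ I) t N hN htN e hA h0

end Paper
end

section
/- For an integer s ≥ 2, let m_1 > m_2 > ... > m_s ≥ 1 and n_1 > n_2 > ... > n_s ≥ 1 be integers with m_1 = n_1. Define X := Σ_{k=1}^s ( Σ_{l=1}^k m_k(e_{kl} + e_{lk}) − m_k e_{kk} ) ∈ M_s(ℤ) and Y := Σ_{k=1}^s ( Σ_{l=1}^k n_k(e_{kl} + e_{lk}) − n_k e_{kk} ) ∈ M_s(ℤ) (so the (i,j)-entry of X is m_{max(i,j)} and of Y is n_{max(i,j)}). Then X and Y are congruent in M_s(ℤ) if and only if there is a permutation σ ∈ Σ_s such that (n_1−n_2, ..., n_{s−1}−n_s, n_s) is obtained from (m_1−m_2, ..., m_{s−1}−m_s, m_s) by permuting the entries according to σ. -/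
open Polynomial CategoryTheory Matrix

universe u

namespace Paper

def diffVec {s : ℕ} (m : Fin s → ℤ) (i : Fin s) : ℤ :=
  if h : (i : ℕ) + 1 < s then m i - m ⟨(i : ℕ) + 1, h⟩ else m i

lemma congr_apply {s : ℕ} (d : Fin s → ℤ) (H : Matrix (Fin s) (Fin s) ℤ) (j k : Fin s) :
    (Hᵀ * Matrix.diagonal d * H) j k = ∑ i, H i j * d i * H i k := by
  rw [Matrix.mul_apply]
  congr 1; ext i
  rw [Matrix.mul_diagonal, Matrix.transpose_apply]

lemma sq_ge_one {x : ℤ} (hx : x ≠ 0) : 1 ≤ x * x := by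
  rcases lt_or_gt_of_ne hx with h | h <;> nlinarith

lemma col_ne_zero {s : ℕ} (H : Matrix (Fin s) (Fin s) ℤ) (hH : IsUnit H) (j : Fin s) :
    ∃ i, H i j ≠ 0 := by
  by_contra hc
  push_neg at hc
  have h1 : H⁻¹ * H = 1 := Matrix.nonsing_inv_mul H ((Matrix.isUnit_iff_isUnit_det H).mp hH)
  have := congrFun (congrFun h1 j) j
  rw [Matrix.mul_apply] at this
  simp [hc] at this

lemma min_le_of_congr {s : ℕ} (d e : Fin s → ℤ) (hd : ∀ i, 0 < d i) (a : ℤ)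
    (ha : ∀ i, a ≤ d i) (H : Matrix (Fin s) (Fin s) ℤ) (hH : IsUnit H)
    (hcong : Hᵀ * Matrix.diagonal d * H = Matrix.diagonal e) (j : Fin s) : a ≤ e j := by
  obtain ⟨i0, hi0⟩ := col_ne_zero H hH j
  have h1 : ∑ i, H i j * d i * H i j = e j := by
    have := congrFun (congrFun hcong j) j
    rw [congr_apply] at this
    simpa using this
  rw [← h1]
  have h2 : a ≤ H i0 j * d i0 * H i0 j := by
    have := sq_ge_one hi0
    nlinarith [hd i0, ha i0]
  refine le_trans h2 (Finset.single_le_sum (f := fun i => H i j * d i * H i j) (fun i _ => ?_) (Finset.mem_univ i0))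
  show (0:ℤ) ≤ H i j * d i * H i j
  nlinarith [mul_nonneg (hd i).le (mul_self_nonneg (H i j))]

/-- symmetry of congruence -/
lemma congr_symm {s : ℕ} (d e : Fin s → ℤ) (H : Matrix (Fin s) (Fin s) ℤ) (hH : IsUnit H)
    (hcong : Hᵀ * Matrix.diagonal d * H = Matrix.diagonal e) :
    IsUnit H⁻¹ ∧ (H⁻¹)ᵀ * Matrix.diagonal e * H⁻¹ = Matrix.diagonal d := by
  have hdet : IsUnit H.det := (Matrix.isUnit_iff_isUnit_det H).mp hH
  have h1 : H * H⁻¹ = 1 := Matrix.mul_nonsing_inv H hdet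
  have h2 : H⁻¹ * H = 1 := Matrix.nonsing_inv_mul H hdet
  constructor
  · exact ⟨⟨H⁻¹, H, h2, h1⟩, rfl⟩
  · have h3 : (H⁻¹)ᵀ * Hᵀ = 1 := by rw [← Matrix.transpose_mul, h1, Matrix.transpose_one]
    calc (H⁻¹)ᵀ * Matrix.diagonal e * H⁻¹
        = (H⁻¹)ᵀ * (Hᵀ * Matrix.diagonal d * H) * H⁻¹ := by rw [hcong]
      _ = ((H⁻¹)ᵀ * Hᵀ) * Matrix.diagonal d * (H * H⁻¹) := by
          simp only [Matrix.mul_assoc]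
      _ = Matrix.diagonal d := by rw [h1, h3, Matrix.one_mul, Matrix.mul_one]

lemma diag_congr_perm : ∀ (s : ℕ) (d e : Fin s → ℤ), (∀ i, 0 < d i) → (∀ i, 0 < e i) →
    (∃ H : Matrix (Fin s) (Fin s) ℤ, IsUnit H ∧ Hᵀ * Matrix.diagonal d * H = Matrix.diagonal e) →
    ∃ σ : Equiv.Perm (Fin s), ∀ i, e i = d (σ i) := by
  intro s
  induction s with
  | zero => exact fun d e _ _ _ => ⟨1, fun i => i.elim0⟩
  | succ n ih =>
    rintro d e hd he ⟨H, hH, hcong⟩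
    obtain ⟨hK, hcong'⟩ := congr_symm d e H hH hcong
    -- choose j0 minimizing e
    obtain ⟨j0, -, hj0⟩ := Finset.exists_min_image Finset.univ e ⟨0, Finset.mem_univ 0⟩
    set a := e j0 with ha_def
    have hamin : ∀ j, a ≤ e j := fun j => hj0 j (Finset.mem_univ j)
    -- a ≤ d i for all i (via the inverse congruence)
    have had : ∀ i, a ≤ d i := fun i => min_le_of_congr e d he a hamin H⁻¹ hK hcong' i
    -- analyze column j0
    obtain ⟨i0, hi0⟩ := col_ne_zero H hH j0
    have hsum : ∑ i, H i j0 * d i * H i j0 = a := by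
      have := congrFun (congrFun hcong j0) j0
      rw [congr_apply] at this
      simpa using this
    have hnonneg : ∀ i : Fin (n+1), (0:ℤ) ≤ H i j0 * d i * H i j0 := fun i =>
      by nlinarith [mul_nonneg (hd i).le (mul_self_nonneg (H i j0))]
    have hterm : a ≤ H i0 j0 * d i0 * H i0 j0 := by
      have := sq_ge_one hi0
      nlinarith [hd i0, had i0]
    have herase : ∑ i ∈ Finset.univ.erase i0, H i j0 * d i * H i j0 = 0 := by
      have h1 : H i0 j0 * d i0 * H i0 j0 + ∑ i ∈ Finset.univ.erase i0, H i j0 * d i * H i j0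
          = ∑ i, H i j0 * d i * H i j0 := Finset.add_sum_erase Finset.univ (fun i => H i j0 * d i * H i j0)
        (Finset.mem_univ i0)
      have h2 : (0:ℤ) ≤ ∑ i ∈ Finset.univ.erase i0, H i j0 * d i * H i j0 :=
        Finset.sum_nonneg fun i _ => hnonneg i
      linarith
    have hcolzero : ∀ i, i ≠ i0 → H i j0 = 0 := by
      intro i hi
      have := (Finset.sum_eq_zero_iff_of_nonneg (fun i _ => hnonneg i)).mp herase i
        (Finset.mem_erase.mpr ⟨hi, Finset.mem_univ i⟩)
      by_contra hne
      have := sq_ge_one hne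
      nlinarith [hd i]
    have hfi0 : H i0 j0 * d i0 * H i0 j0 = a := by
      have h1 : H i0 j0 * d i0 * H i0 j0 + ∑ i ∈ Finset.univ.erase i0, H i j0 * d i * H i j0
          = ∑ i, H i j0 * d i * H i j0 := Finset.add_sum_erase Finset.univ (fun i => H i j0 * d i * H i j0)
        (Finset.mem_univ i0)
      linarith
    have hdi0 : d i0 = a := by
      have h1 := sq_ge_one hi0
      nlinarith [had i0, hd i0]
    have hsq : H i0 j0 * H i0 j0 = 1 := by
      have h1 := sq_ge_one hi0
      nlinarith [hd i0]
    -- row i0 is zero away from j0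
    have hrowzero : ∀ k, k ≠ j0 → H i0 k = 0 := by
      intro k hk
      have h1 : ∑ i, H i j0 * d i * H i k = 0 := by
        have := congrFun (congrFun hcong j0) k
        rw [congr_apply] at this
        rwa [Matrix.diagonal_apply_ne' e hk] at this
      rw [Finset.sum_eq_single_of_mem i0 (Finset.mem_univ i0)
        (fun b _ hb => by rw [hcolzero b hb]; ring)] at h1
      have h2 : d i0 * H i0 k = 0 := by
        linear_combination H i0 j0 * h1 - (d i0 * H i0 k) * hsq
      exact (mul_eq_zero.mp h2).resolve_left (hd i0).ne'
    -- the reduced matrix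
    set H' : Matrix (Fin n) (Fin n) ℤ := H.submatrix i0.succAbove j0.succAbove with hH'def
    have hcong'' : H'ᵀ * Matrix.diagonal (d ∘ i0.succAbove) * H'
        = Matrix.diagonal (e ∘ j0.succAbove) := by
      ext q r
      rw [congr_apply]
      have hfull : ∑ i : Fin (n+1), H i (j0.succAbove q) * d i * H i (j0.succAbove r)
          = Matrix.diagonal e (j0.succAbove q) (j0.succAbove r) := by
        rw [← congr_apply, hcong]
      rw [Fin.sum_univ_succAbove (fun i => H i (j0.succAbove q) * d i * H i (j0.succAbove r)) i0,
        hrowzero _ (Fin.succAbove_ne j0 q)] at hfull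
      simp only [zero_mul, mul_zero, zero_add] at hfull
      simp only [hH'def, Matrix.submatrix_apply, Function.comp_apply]
      rw [hfull]
      rcases eq_or_ne q r with rfl | hqr
      · rw [Matrix.diagonal_apply_eq, Matrix.diagonal_apply_eq]
        rfl
      · rw [Matrix.diagonal_apply_ne _ hqr, Matrix.diagonal_apply_ne _
          (fun hc => hqr (Fin.succAbove_right_injective hc))]
    have hH' : IsUnit H' := by
      rw [Matrix.isUnit_iff_isUnit_det]
      have hdet : H.det = ((-1) ^ ((i0:ℕ) + (j0:ℕ)) * H i0 j0) * H'.det := by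
        rw [Matrix.det_succ_column H j0,
          Finset.sum_eq_single_of_mem i0 (Finset.mem_univ i0)
            (fun b _ hb => by rw [hcolzero b hb]; ring)]
      have : IsUnit (((-1:ℤ) ^ ((i0:ℕ) + (j0:ℕ)) * H i0 j0) * H'.det) := by
        rw [← hdet]; exact (Matrix.isUnit_iff_isUnit_det H).mp hH
      exact isUnit_of_mul_isUnit_right this
    obtain ⟨σ', hσ'⟩ := ih (d ∘ i0.succAbove) (e ∘ j0.succAbove)
      (fun p => hd _) (fun q => he _) ⟨H', hH', hcong''⟩
    refine ⟨(finSuccEquiv' j0).trans ((Equiv.optionCongr σ').trans (finSuccEquiv' i0).symm), ?_⟩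
    intro k
    rcases eq_or_ne k j0 with rfl | hk
    · simp only [Equiv.trans_apply]
      rw [finSuccEquiv'_at]
      simp only [Equiv.optionCongr_apply, Option.map_none]
      rw [finSuccEquiv'_symm_none]
      rw [hdi0]
    · obtain ⟨q, rfl⟩ := Fin.exists_succAbove_eq hk
      simp only [Equiv.trans_apply]
      rw [finSuccEquiv'_succAbove]
      simp only [Equiv.optionCongr_apply, Option.map_some]
      rw [finSuccEquiv'_symm_some]
      exact hσ' q

/-- easy direction: a permutation yields a congruence of diagonal matrices -/
lemma perm_congr {s : ℕ} (d e : Fin s → ℤ) (σ : Equiv.Perm (Fin s))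
    (h : ∀ i, e i = d (σ i)) :
    ∃ K : Matrix (Fin s) (Fin s) ℤ, IsUnit K ∧ Kᵀ * Matrix.diagonal d * K = Matrix.diagonal e := by
  set K : Matrix (Fin s) (Fin s) ℤ := fun i j => if i = σ j then 1 else 0 with hKdef
  have hKK : Kᵀ * K = 1 := by
    ext j k
    rw [Matrix.mul_apply]
    simp only [Matrix.transpose_apply]; simp only [hKdef]
    rcases eq_or_ne j k with rfl | hjk
    · rw [Finset.sum_eq_single_of_mem (σ j) (Finset.mem_univ _)
        (fun b _ hb => by rw [if_neg hb, zero_mul])]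
      simp
    · rw [Finset.sum_eq_zero, Matrix.one_apply_ne hjk]
      intro i _
      rcases eq_or_ne i (σ j) with rfl | hij
      · rw [if_neg (fun hc => hjk (σ.injective hc)), mul_zero]
      · rw [if_neg hij, zero_mul]
  have hKK' : K * Kᵀ = 1 := by
    ext i k
    rw [Matrix.mul_apply]
    simp only [Matrix.transpose_apply]; simp only [hKdef]
    rcases eq_or_ne i k with rfl | hik
    · rw [Finset.sum_eq_single_of_mem (σ.symm i) (Finset.mem_univ _)
        (fun b _ hb => by rw [if_neg (fun hc => hb (by rw [hc, Equiv.symm_apply_apply])), zero_mul])]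
      simp
    · rw [Finset.sum_eq_zero, Matrix.one_apply_ne hik]
      intro j _
      rcases eq_or_ne i (σ j) with rfl | hij
      · rw [if_pos rfl, one_mul, if_neg (fun hc => hik hc.symm)]
      · rw [if_neg hij, zero_mul]
  refine ⟨K, ⟨⟨K, Kᵀ, hKK', hKK⟩, rfl⟩, ?_⟩
  ext j k
  rw [congr_apply]
  simp only [hKdef]
  rcases eq_or_ne j k with rfl | hjk
  · rw [Finset.sum_eq_single_of_mem (σ j) (Finset.mem_univ _)
      (fun b _ hb => by rw [if_neg hb]; ring)]
    rw [Matrix.diagonal_apply_eq, if_pos rfl, h j]; ring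
  · rw [Finset.sum_eq_zero, Matrix.diagonal_apply_ne _ hjk]
    intro i _
    rcases eq_or_ne i (σ j) with rfl | hij
    · rw [if_neg (fun hc => hjk (σ.injective hc))]; ring
    · rw [if_neg hij]; ring

lemma diffVec_pos {s : ℕ} (m : Fin s → ℤ) (hm : StrictAnti m) (hm1 : ∀ i, 1 ≤ m i) (i : Fin s) :
    0 < diffVec m i := by
  unfold diffVec
  split
  · rename_i h
    have : i < (⟨(i : ℕ) + 1, h⟩ : Fin s) := by
      rw [Fin.lt_def]; simp
    have := hm this
    omega
  · exact lt_of_lt_of_le one_pos (hm1 i)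

/-- telescoping -/
lemma sum_diffVec {n : ℕ} (m : Fin (n+1) → ℤ) (j : Fin (n+1)) :
    ∑ k, (if j ≤ k then diffVec m k else 0) = m j := by
  induction j using Fin.reverseInduction with
  | last =>
    rw [Finset.sum_congr rfl (fun k _ => if_congr Fin.last_le_iff rfl rfl)]
    rw [Finset.sum_ite_eq' Finset.univ (Fin.last n) (fun k => diffVec m k),
      if_pos (Finset.mem_univ _)]
    unfold diffVec
    rw [dif_neg (by simp)]
  | cast i ihs =>
    have hpoint : ∀ k, (if i.castSucc ≤ k then diffVec m k else 0)
        = (if k = i.castSucc then diffVec m k else 0) + (if i.succ ≤ k then diffVec m k else 0) := by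
      intro k
      have h1 : ((i.castSucc : ℕ) : ℤ) = (i : ℤ) := by simp
      split_ifs with h2 h3 h4 h5 h6 <;>
        simp only [Fin.le_def, Fin.ext_iff, Fin.coe_castSucc, Fin.val_succ] at * <;> omega
    rw [Finset.sum_congr rfl (fun k _ => hpoint k), Finset.sum_add_distrib,
      Finset.sum_ite_eq' Finset.univ i.castSucc (fun k => diffVec m k),
      if_pos (Finset.mem_univ _), ihs]
    have h2 : ((i.castSucc : ℕ) : ℕ) + 1 < n + 1 := by simp [i.isLt]
    unfold diffVec
    rw [dif_pos h2]
    have h3 : (⟨(i.castSucc : ℕ) + 1, h2⟩ : Fin (n+1)) = i.succ := by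
      simp [Fin.ext_iff]
    rw [h3]
    ring

/-- the unipotent change-of-basis matrix -/
def Pmat (s : ℕ) : Matrix (Fin s) (Fin s) ℤ := fun k i => if i ≤ k then 1 else 0

lemma Pmat_isUnit (s : ℕ) : IsUnit (Pmat s) := by
  rw [Matrix.isUnit_iff_isUnit_det]
  have h : (Pmat s).det = 1 := by
    rw [Matrix.det_of_lowerTriangular (Pmat s) (fun i j hij => if_neg (not_le.mpr hij))]
    exact Finset.prod_eq_one (fun i _ => if_pos le_rfl)
  rw [h]
  exact isUnit_one

lemma Pmat_congr {n : ℕ} (m : Fin (n+1) → ℤ) (A : Matrix (Fin (n+1)) (Fin (n+1)) ℤ)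
    (hA : ∀ i j, A i j = m (max i j)) :
    A = (Pmat (n+1))ᵀ * Matrix.diagonal (diffVec m) * Pmat (n+1) := by
  ext i j
  rw [hA, congr_apply]
  rw [Finset.sum_congr rfl (fun k _ => show Pmat (n+1) k i * diffVec m k * Pmat (n+1) k j
      = if max i j ≤ k then diffVec m k else 0 from by
    by_cases h1 : i ≤ k <;> by_cases h2 : j ≤ k <;> simp [Pmat, h1, h2, max_le_iff])]
  exact (sum_diffVec m (max i j)).symm

lemma inv_side {s : ℕ} (P D A : Matrix (Fin s) (Fin s) ℤ) (hdet : IsUnit P.det)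
    (hA : A = Pᵀ * D * P) : D = (P⁻¹)ᵀ * A * P⁻¹ := by
  have hdetT : IsUnit Pᵀ.det := by rwa [Matrix.det_transpose]
  rw [hA]
  simp only [Matrix.transpose_nonsing_inv, Matrix.mul_assoc]
  rw [Matrix.mul_nonsing_inv P hdet, Matrix.mul_one,
    Matrix.nonsing_inv_mul_cancel_left _ _ hdetT]

lemma congr_transfer {s : ℕ} (P : Matrix (Fin s) (Fin s) ℤ) (hP : IsUnit P)
    (D E A B : Matrix (Fin s) (Fin s) ℤ) (hA : A = Pᵀ * D * P) (hB : B = Pᵀ * E * P)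
    (h : ∃ K : Matrix (Fin s) (Fin s) ℤ, IsUnit K ∧ Kᵀ * D * K = E) :
    ∃ H : Matrix (Fin s) (Fin s) ℤ, IsUnit H ∧ Hᵀ * A * H = B := by
  obtain ⟨K, hK, hcong⟩ := h
  have hdet := (Matrix.isUnit_iff_isUnit_det P).mp hP
  have hdetT : IsUnit Pᵀ.det := by rwa [Matrix.det_transpose]
  have h1 : P * P⁻¹ = 1 := Matrix.mul_nonsing_inv P hdet
  have h2 : P⁻¹ * P = 1 := Matrix.nonsing_inv_mul P hdet
  have hPinv : IsUnit P⁻¹ := ⟨⟨P⁻¹, P, h2, h1⟩, rfl⟩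
  refine ⟨P⁻¹ * K * P, (hPinv.mul hK).mul hP, ?_⟩
  rw [hA, hB]
  simp only [Matrix.transpose_mul, Matrix.transpose_nonsing_inv, Matrix.mul_assoc]
  rw [Matrix.nonsing_inv_mul_cancel_left _ _ hdetT,
    Matrix.mul_nonsing_inv_cancel_left _ _ hdet, ← hcong]
  simp only [Matrix.mul_assoc]

/-- For `s ≥ 2`, let `m_1 > ⋯ > m_s ≥ 1` and `n_1 > ⋯ > n_s ≥ 1` be
integers with `m_1 = n_1`, and let `X`, `Y` be the integer matrices with entries
`X i j = m (max i j)`, `Y i j = n (max i j)`.  Then `X` and `Y` are congruent in `M_s(ℤ)` if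
and only if the vector of consecutive differences of `n` is a permutation of the vector of
consecutive differences of `m`. -/
theorem statement16 {s : ℕ} (hs : 2 ≤ s) (m n : Fin s → ℤ)
    (hm : StrictAnti m) (hn : StrictAnti n)
    (hm1 : ∀ i, 1 ≤ m i) (hn1 : ∀ i, 1 ≤ n i)
    (hmn : m ⟨0, by omega⟩ = n ⟨0, by omega⟩)
    (A B : Matrix (Fin s) (Fin s) ℤ)
    (hA : ∀ i j, A i j = m (max i j)) (hB : ∀ i j, B i j = n (max i j)) :
    (∃ H : Matrix (Fin s) (Fin s) ℤ, IsUnit H ∧ Hᵀ * A * H = B) ↔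
      ∃ σ : Equiv.Perm (Fin s), ∀ i, diffVec n i = diffVec m (σ i) := by
  obtain ⟨t, rfl⟩ : ∃ t, s = t + 1 := ⟨s - 1, by omega⟩
  have hP := Pmat_isUnit (t+1)
  have hdet := (Matrix.isUnit_iff_isUnit_det _).mp hP
  have hAe : A = (Pmat (t+1))ᵀ * Matrix.diagonal (diffVec m) * Pmat (t+1) := Pmat_congr m A hA
  have hBe : B = (Pmat (t+1))ᵀ * Matrix.diagonal (diffVec n) * Pmat (t+1) := Pmat_congr n B hB
  have h1 : Pmat (t+1) * (Pmat (t+1))⁻¹ = 1 := Matrix.mul_nonsing_inv _ hdet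
  have h2 : (Pmat (t+1))⁻¹ * Pmat (t+1) = 1 := Matrix.nonsing_inv_mul _ hdet
  have hPinv : IsUnit (Pmat (t+1))⁻¹ := ⟨⟨(Pmat (t+1))⁻¹, Pmat (t+1), h2, h1⟩, rfl⟩
  have hdetInv := (Matrix.isUnit_iff_isUnit_det _).mp hPinv
  constructor
  · intro hex
    refine diag_congr_perm (t+1) (diffVec m) (diffVec n)
      (diffVec_pos m hm hm1) (diffVec_pos n hn hn1) ?_
    refine congr_transfer (Pmat (t+1))⁻¹ hPinv A B _ _ ?_ ?_ hex
    · exact inv_side _ _ _ hdet hAe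
    · exact inv_side _ _ _ hdet hBe
  · intro ⟨σ, hσ⟩
    exact congr_transfer (Pmat (t+1)) hP _ _ A B hAe hBe
      (perm_congr (diffVec m) (diffVec n) σ hσ)

end Paper
end
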